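/- Let S and A be nonempty finite types with A having at least two elements, let π* : S → A, and let B = {(s,a) ∈ S × A : a ≠ π*(s)}. Let H : S × A → ℝ satisfy H(s,a) > 0 for all (s,a) ∈ B, and let H₀ > 0. For a strictly positive probability vector ω on S × A define Ũ(ω) = max_{(s,a)∈B} H(s,a)/ω(s,a) + H₀ / min_{s∈S} ω(s,π*(s)). Set Γ = ∑_{(s,a)∈B} H(s,a) + √(|S|·H₀·∑_{(s,a)∈B} H(s,a)) and define ω*(s,a) = H(s,a)/Γ for (s,a) ∈ B and ω*(s,π*(s)) = √(H₀·∑_{(s,a)∈B} H(s,a)/|S|)/Γ for each s. Then ω* is a strictly positive probability vector on S × A, every strictly positive probability vector ω satisfies Ũ(ω) ≥ (√(∑_{(s,a)∈B} H(s,a)) + √(|S|·H₀))², equality holds at ω = ω*, and moreover (√(∑_{(s,a)∈B} H(s,a)) + √(|S|·H₀))² ≤ 2·(∑_{(s,a)∈B} H(s,a) + |S|·H₀). -/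

import Mathlib

/-- Closed-form optimal generative allocation: the allocation `ω*` defined from
the difficulty constants `H(s,a)` (suboptimal pairs) and `H₀` (optimal pairs)
is a strictly positive probability vector minimizing
`Ũ(ω) = max_{(s,a): a ≠ π*(s)} H(s,a)/ω(s,a) + H₀ / min_s ω(s,π*(s))`, with
optimal value `(√(∑ H) + √(|S|·H₀))² ≤ 2·(∑ H + |S|·H₀)`. -/
theorem generative_allocation_closed_form {S A : Type*}
    [Fintype S] [Nonempty S] [Fintype A] [DecidableEq A]
    (πst : S → A) (hA : 2 ≤ Fintype.card A)
    (H : S × A → ℝ) (hH : ∀ s a, a ≠ πst s → 0 < H (s, a))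
    (H₀ : ℝ) (hH₀ : 0 < H₀)
    (Bsum : ℝ)
    (hBsum : Bsum = ∑ q ∈ Finset.univ.filter (fun q : S × A => q.2 ≠ πst q.1), H q)
    (Γ : ℝ)
    (hΓ : Γ = Bsum + Real.sqrt ((Fintype.card S : ℝ) * H₀ * Bsum))
    (ωst : S × A → ℝ)
    (hωst : ∀ s a, ωst (s, a) =
      if a = πst s then Real.sqrt (H₀ * Bsum / (Fintype.card S : ℝ)) / Γ
      else H (s, a) / Γ)
    (U : (S × A → ℝ) → ℝ)
    (hU : ∀ ω, U ω =
      sSup {x : ℝ | ∃ s a, a ≠ πst s ∧ x = H (s, a) / ω (s, a)} +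
        H₀ / sInf {x : ℝ | ∃ s, x = ω (s, πst s)}) :
    ((∀ q, 0 < ωst q) ∧ ∑ q, ωst q = 1) ∧
      (∀ ω : S × A → ℝ, (∀ q, 0 < ω q) → ∑ q, ω q = 1 →
        (Real.sqrt Bsum + Real.sqrt ((Fintype.card S : ℝ) * H₀)) ^ 2 ≤ U ω) ∧
      U ωst = (Real.sqrt Bsum + Real.sqrt ((Fintype.card S : ℝ) * H₀)) ^ 2 ∧
      (Real.sqrt Bsum + Real.sqrt ((Fintype.card S : ℝ) * H₀)) ^ 2 ≤
        2 * (Bsum + (Fintype.card S : ℝ) * H₀) := by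
  obtain ⟨s₀⟩ := (inferInstance : Nonempty S)
  obtain ⟨a₀, ha₀⟩ := Fintype.exists_ne_of_one_lt_card (by omega : 1 < Fintype.card A) (πst s₀)
  set n : ℝ := (Fintype.card S : ℝ) with hn_def
  have hn : 0 < n := by
    have := Fintype.card_pos (α := S)
    positivity
  set sB := Real.sqrt Bsum with hsB_def
  set sN := Real.sqrt (n * H₀) with hsN_def
  -- Bsum positive
  have hBpos : 0 < Bsum := by
    rw [hBsum]
    apply Finset.sum_pos
    · intro q hq
      simp only [Finset.mem_filter] at hq
      exact hH q.1 q.2 hq.2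
    · exact ⟨(s₀, a₀), by simp [ha₀]⟩
  have hsB2 : sB ^ 2 = Bsum := Real.sq_sqrt hBpos.le
  have hsN2 : sN ^ 2 = n * H₀ := Real.sq_sqrt (by positivity)
  have hsBpos : 0 < sB := Real.sqrt_pos.mpr hBpos
  have hsNpos : 0 < sN := Real.sqrt_pos.mpr (by positivity)
  -- Γ facts
  have hΓeq : Γ = sB * (sB + sN) := by
    rw [hΓ, Real.sqrt_mul (by positivity : (0:ℝ) ≤ n * H₀) Bsum]
    rw [hsN_def, hsB_def]
    nlinarith [Real.sq_sqrt hBpos.le]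
  have hΓpos : 0 < Γ := by rw [hΓeq]; positivity
  set k := Real.sqrt (H₀ * Bsum / n) with hk_def
  have hkpos : 0 < k := Real.sqrt_pos.mpr (by positivity)
  have hnk : n * k = Real.sqrt (n * H₀ * Bsum) := by
    rw [show n * H₀ * Bsum = n ^ 2 * (H₀ * Bsum / n) by field_simp,
      Real.sqrt_mul (by positivity), Real.sqrt_sq hn.le]
  have hkey : k * sN = H₀ * sB := by
    rw [hk_def, hsN_def, ← Real.sqrt_mul (by positivity),
      show H₀ * Bsum / n * (n * H₀) = H₀ ^ 2 * Bsum by field_simp,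
      Real.sqrt_mul (by positivity), Real.sqrt_sq hH₀.le]
  -- Bsum as a double sum
  have hBsum2 : Bsum = ∑ s, ∑ a ∈ Finset.univ.erase (πst s), H (s, a) := by
    rw [hBsum, Finset.sum_filter, Fintype.sum_prod_type]
    refine Finset.sum_congr rfl fun s _ => ?_
    rw [← Finset.sum_filter]
    congr 1
    ext a
    simp [Finset.mem_erase]
  -- positivity of ωst
  have hpos : ∀ q : S × A, 0 < ωst q := by
    rintro ⟨s, a⟩
    rw [hωst s a]
    by_cases h : a = πst s
    · rw [if_pos h]; positivity
    · rw [if_neg h]; exact div_pos (hH s a h) hΓpos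
  -- sum of ωst = 1
  have hsum1 : ∑ q, ωst q = 1 := by
    rw [Fintype.sum_prod_type]
    have : ∀ s : S, ∑ a, ωst (s, a) = k / Γ + (∑ a ∈ Finset.univ.erase (πst s), H (s, a)) / Γ := by
      intro s
      rw [← Finset.add_sum_erase _ _ (Finset.mem_univ (πst s)), hωst, if_pos rfl,
        Finset.sum_div]
      congr 1
      refine Finset.sum_congr rfl fun a ha => ?_
      rw [hωst, if_neg (Finset.mem_erase.mp ha).1]
    rw [Finset.sum_congr rfl fun s _ => this s, Finset.sum_add_distrib, Finset.sum_const,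
      Finset.card_univ, nsmul_eq_mul, ← Finset.sum_div, ← hBsum2]
    have h1 : n * k + Bsum = Γ := by rw [hnk, hΓ]; ring
    field_simp
    linear_combination h1
  refine ⟨⟨hpos, hsum1⟩, ?_, ?_, ?_⟩
  · -- lower bound for arbitrary ω
    intro ω hω hωsum
    set M := sSup {x : ℝ | ∃ s a, a ≠ πst s ∧ x = H (s, a) / ω (s, a)} with hM_def
    set m := sInf {x : ℝ | ∃ s, x = ω (s, πst s)} with hm_def
    have hfin1 : ({x : ℝ | ∃ s a, a ≠ πst s ∧ x = H (s, a) / ω (s, a)}).Finite :=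
      Set.Finite.subset (Set.finite_range fun q : S × A => H q / ω q)
        (by rintro x ⟨s, a, ha, rfl⟩; exact ⟨(s, a), rfl⟩)
    have hne1 : ({x : ℝ | ∃ s a, a ≠ πst s ∧ x = H (s, a) / ω (s, a)}).Nonempty :=
      ⟨_, s₀, a₀, ha₀, rfl⟩
    have hfin2 : ({x : ℝ | ∃ s, x = ω (s, πst s)}).Finite :=
      Set.Finite.subset (Set.finite_range fun s : S => ω (s, πst s))
        (by rintro x ⟨s, rfl⟩; exact ⟨s, rfl⟩)
    have hne2 : ({x : ℝ | ∃ s, x = ω (s, πst s)}).Nonempty := ⟨_, s₀, rfl⟩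
    obtain ⟨s₁, a₁, ha₁, hM_eq⟩ := hne1.csSup_mem hfin1
    have hMpos : 0 < M := by rw [← hM_def] at hM_eq; rw [hM_eq]; exact div_pos (hH _ _ ha₁) (hω _)
    obtain ⟨s₂, hm_eq⟩ := hne2.csInf_mem hfin2
    have hmpos : 0 < m := by rw [← hm_def] at hm_eq; rw [hm_eq]; exact hω _
    have hub : ∀ s a, a ≠ πst s → H (s, a) / M ≤ ω (s, a) := by
      intro s a ha
      have hle : H (s, a) / ω (s, a) ≤ M := le_csSup hfin1.bddAbove ⟨s, a, ha, rfl⟩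
      rw [div_le_iff₀ (hω (s, a))] at hle
      rw [div_le_iff₀ hMpos]
      linarith [hle, mul_comm M (ω (s, a))]
    have hmb : ∀ s : S, m ≤ ω (s, πst s) := fun s => csInf_le hfin2.bddBelow ⟨s, rfl⟩
    have hcon : Bsum / M + n * m ≤ 1 := by
      have h1 : ∑ s, (m + ∑ a ∈ Finset.univ.erase (πst s), H (s, a) / M) ≤ ∑ q, ω q := by
        rw [Fintype.sum_prod_type]
        refine Finset.sum_le_sum fun s _ => ?_
        rw [← Finset.add_sum_erase _ _ (Finset.mem_univ (πst s))]
        exact add_le_add (hmb s)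
          (Finset.sum_le_sum fun a ha => hub s a (Finset.mem_erase.mp ha).1)
      rw [hωsum] at h1
      have h2 : Bsum / M = ∑ s : S, ∑ a ∈ Finset.univ.erase (πst s), H (s, a) / M := by
        rw [hBsum2, Finset.sum_div]
        exact Finset.sum_congr rfl fun s _ => Finset.sum_div _ _ _
      rw [Finset.sum_add_distrib, Finset.sum_const, Finset.card_univ, nsmul_eq_mul, ← h2] at h1
      linarith [hn_def.ge, hn_def.le]
    set x := 1 - n * m with hx_def
    have hBM : 0 < Bsum / M := div_pos hBpos hMpos
    have hxpos : 0 < x := by rw [hx_def]; linarith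
    have hMx : Bsum / x ≤ M := by
      rw [div_le_iff₀ hxpos]
      have h4 : Bsum / M ≤ x := by linarith
      rw [div_le_iff₀ hMpos] at h4
      linarith [mul_comm M x]
    have hxy : x + n * m = 1 := by rw [hx_def]; ring
    have hsq : sB ^ 2 * (n * m) + sN ^ 2 * x - (sB + sN) ^ 2 * (x * (n * m))
        = (sB * (n * m) - sN * x) ^ 2 := by
      linear_combination (-(sB ^ 2 * (n * m) + sN ^ 2 * x)) * hxy
    have key2 : (sB + sN) ^ 2 * (x * (n * m)) ≤ sB ^ 2 * (n * m) + sN ^ 2 * x := by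
      nlinarith [sq_nonneg (sB * (n * m) - sN * x)]
    have hgoal2 : (sB + sN) ^ 2 ≤ Bsum / x + H₀ / m := by
      rw [div_add_div _ _ hxpos.ne' hmpos.ne', le_div_iff₀ (by positivity)]
      have h3 : n * ((sB + sN) ^ 2 * (x * m)) ≤ n * (Bsum * m + x * H₀) := by
        calc n * ((sB + sN) ^ 2 * (x * m)) = (sB + sN) ^ 2 * (x * (n * m)) := by ring
          _ ≤ sB ^ 2 * (n * m) + sN ^ 2 * x := key2
          _ = n * (Bsum * m + x * H₀) := by rw [hsB2, hsN2]; ring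
      exact le_of_mul_le_mul_left h3 hn
    rw [hU ω, ← hM_def, ← hm_def]
    calc (sB + sN) ^ 2 ≤ Bsum / x + H₀ / m := hgoal2
      _ ≤ M + H₀ / m := add_le_add_left hMx _
  · -- equality at ωst
    have e1 : {x : ℝ | ∃ s a, a ≠ πst s ∧ x = H (s, a) / ωst (s, a)} = {Γ} := by
      ext x
      simp only [Set.mem_setOf_eq, Set.mem_singleton_iff]
      constructor
      · rintro ⟨s, a, ha, rfl⟩
        rw [hωst, if_neg ha, div_div_eq_mul_div, mul_comm, mul_div_assoc,
          div_self (hH s a ha).ne', mul_one]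
      · rintro rfl
        exact ⟨s₀, a₀, ha₀, by
          rw [hωst, if_neg ha₀, div_div_eq_mul_div, mul_comm, mul_div_assoc,
            div_self (hH s₀ a₀ ha₀).ne', mul_one]⟩
    have e2 : {x : ℝ | ∃ s, x = ωst (s, πst s)} = {k / Γ} := by
      ext x
      simp only [Set.mem_setOf_eq, Set.mem_singleton_iff]
      constructor
      · rintro ⟨s, rfl⟩; rw [hωst, if_pos rfl]
      · rintro rfl; exact ⟨s₀, by rw [hωst, if_pos rfl]⟩
    rw [hU, e1, e2, csSup_singleton, csInf_singleton, div_div_eq_mul_div, hΓeq]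
    have h5 : H₀ * (sB * (sB + sN)) / k = sN * (sB + sN) := by
      rw [div_eq_iff hkpos.ne']
      linear_combination (-(sB + sN)) * hkey
    rw [h5]
    ring
  · have e : (sB + sN) ^ 2 = (Bsum + n * H₀) + 2 * (sB * sN) := by
      rw [← hsB2, ← hsN2]; ring
    have e2 : (sB - sN) ^ 2 = (Bsum + n * H₀) - 2 * (sB * sN) := by
      rw [← hsB2, ← hsN2]; ring
    linarith [sq_nonneg (sB - sN), e, e2]
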